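/- arXiv:0708.2179 — 2 statements merged into one kernel-verified Lean document; each statement's English description precedes it below -/
import Mathlib

section
/- If a positive semidefinite trigonometric polynomial S(z) = \sum_{n=-m}^m \sigma_n z^n on the unit circle (with scalar complex coefficients) is nonnegative for all |z|=1, then there exists an analytic polynomial p(z) = \sum_{n=0}^m \rho_n z^n such that S(z) = |p(z)|^2 for all |z|=1. -/
open MeasureTheory Complex Metric Set Matrix
open scoped ComplexOrder

/-- Membership in the Hardy space `H_p` (`0 < p < ∞`) of the unit disk:
analytic on the open unit disk with uniformly bounded `p`-th power means. -/
def HardyMem (p : ℝ) (f : ℂ → ℂ) : Prop :=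
  DifferentiableOn ℂ f (ball (0:ℂ) 1) ∧
  ∃ C : ℝ, ∀ r : ℝ, 0 ≤ r → r < 1 →
    (∫ t in (0:ℝ)..(2 * Real.pi), ‖f ((r : ℂ) * Complex.exp (t * Complex.I))‖ ^ p) ≤ C

/-- Membership in `H_∞`: bounded analytic functions on the unit disk. -/
def HardyInfMem (f : ℂ → ℂ) : Prop :=
  DifferentiableOn ℂ f (ball (0:ℂ) 1) ∧ ∃ C : ℝ, ∀ z ∈ ball (0:ℂ) 1, ‖f z‖ ≤ C

/-- `F` is the boundary-value function of `f` : radial limits a.e. on the circle. -/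
def IsBoundaryValue (f : ℂ → ℂ) (F : ℝ → ℂ) : Prop :=
  ∀ᵐ (t : ℝ) ∂(volume.restrict (Set.Ioc (0:ℝ) (2*Real.pi))),
    Filter.Tendsto (fun r : ℝ => f ((r:ℂ) * Complex.exp (t * Complex.I)))
      (nhdsWithin 1 (Set.Iio 1)) (nhds (F t))

/-- `n`-th Fourier coefficient of a function on the unit circle. -/
noncomputable def fc (F : ℝ → ℂ) (n : ℤ) : ℂ :=
  (2 * Real.pi)⁻¹ * ∫ t in (0:ℝ)..(2*Real.pi), F t * Complex.exp (-(n : ℂ) * t * Complex.I)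

/-- An outer function on the unit disk, given by the canonical exponential
representation with integrable `log k`. -/
def IsOuter (h : ℂ → ℂ) : Prop :=
  ∃ (c : ℂ) (k : ℝ → ℝ), ‖c‖ = 1 ∧
    IntervalIntegrable (fun t => Real.log (k t)) volume 0 (2*Real.pi) ∧
    ∀ z ∈ ball (0:ℂ) 1,
      h z = c * Complex.exp (((2*Real.pi : ℝ) : ℂ)⁻¹ *
        ∫ t in (0:ℝ)..(2*Real.pi),
          ((Complex.exp (t*Complex.I) + z)/(Complex.exp (t*Complex.I) - z)) * (Real.log (k t) : ℂ))


section FejerRieszAux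

open Polynomial Complex Finset Filter

noncomputable def Qpoly (k : ℕ) (τ : ℤ → ℂ) : Polynomial ℂ :=
  ∑ n ∈ Finset.range (2*k+1), Polynomial.monomial n (τ ((n : ℤ) - k))

lemma Qpoly_coeff (k : ℕ) (τ : ℤ → ℂ) (n : ℕ) :
    (Qpoly k τ).coeff n = if n ≤ 2*k then τ ((n : ℤ) - k) else 0 := by
  unfold Qpoly
  rw [Polynomial.finset_sum_coeff]
  simp only [Polynomial.coeff_monomial]
  rw [Finset.sum_ite_eq' (Finset.range (2*k+1)) n (fun i => τ ((i:ℤ) - k))]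
  simp [Nat.lt_succ_iff]

lemma Qpoly_natDegree_le (k : ℕ) (τ : ℤ → ℂ) : (Qpoly k τ).natDegree ≤ 2*k := by
  rw [Polynomial.natDegree_le_iff_coeff_eq_zero]
  intro N hN
  rw [Qpoly_coeff]
  simp [Nat.not_le.mpr hN, Nat.not_lt.mpr hN.le]

lemma Icc_eq_map (k : ℕ) :
    Finset.Icc (-(k:ℤ)) (k:ℤ) = (Finset.range (2*k+1)).map
      ⟨fun n : ℕ => (n:ℤ) - k, by intro a b h; simpa using h⟩ := by
  ext a
  simp only [Finset.mem_Icc, Finset.mem_map, Finset.mem_range, Function.Embedding.coeFn_mk]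
  constructor
  · rintro ⟨h1, h2⟩
    exact ⟨(a + k).toNat, by omega, by show ((a + k).toNat : ℤ) - k = a; omega⟩
  · rintro ⟨n, hn, rfl⟩
    show -(k:ℤ) ≤ (n:ℤ) - k ∧ (n:ℤ) - k ≤ k
    omega

lemma trig_eval (k : ℕ) (τ : ℤ → ℂ) (z : ℂ) (hz : z ≠ 0) :
    ∑ n ∈ Finset.Icc (-(k:ℤ)) (k:ℤ), τ n * z ^ n
      = z ^ (-(k:ℤ)) * (Qpoly k τ).eval z := by
  unfold Qpoly
  rw [Polynomial.eval_finset_sum, Finset.mul_sum, Icc_eq_map k, Finset.sum_map]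
  apply Finset.sum_congr rfl
  intro n _
  simp only [Function.Embedding.coeFn_mk, Polynomial.eval_monomial]
  show τ ((n:ℤ) - k) * z ^ ((n:ℤ) - k) = _
  rw [_root_.zpow_sub₀ hz, _root_.zpow_natCast]
  field_simp
  simp [_root_.zpow_neg, mul_assoc, hz]

lemma circle_infinite : {z : ℂ | ‖z‖ = 1}.Infinite := by
  have hinj : Set.InjOn (fun t : ℝ => Complex.exp (t * Complex.I)) (Set.Ico 0 1) := by
    intro a ha b hb hab
    rw [Complex.exp_eq_exp_iff_exists_int] at hab
    obtain ⟨n, hn⟩ := hab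
    have : (a : ℂ) = b + n * (2 * Real.pi) := by
      have hI : (Complex.I : ℂ) ≠ 0 := Complex.I_ne_zero
      have h' : (a:ℂ) * I = ((b:ℂ) + (n:ℂ) * (2 * Real.pi)) * I := by linear_combination hn
      exact mul_right_cancel₀ hI h'
    have h2 : a = b + n * (2 * Real.pi) := by exact_mod_cast this
    have hpi : (2:ℝ) < 2 * Real.pi := by nlinarith [Real.pi_gt_three]
    simp only [Set.mem_Ico] at ha hb
    have : n = 0 := by
      by_contra hne
      rcases lt_or_gt_of_ne hne with h | h
      · have h1 : (n:ℝ) ≤ -1 := by exact_mod_cast (by omega : n ≤ -1)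
        nlinarith
      · have h1 : (1:ℝ) ≤ (n:ℝ) := by exact_mod_cast h
        nlinarith
    rw [this] at h2; push_cast at h2; linarith
  have := Set.Infinite.image hinj (Set.Ico_infinite (by norm_num : (0:ℝ) < 1))
  apply this.mono
  rintro z ⟨t, _, rfl⟩
  simp [Set.mem_setOf_eq, Complex.norm_exp_ofReal_mul_I]

lemma poly_eq_of_circle (P Q : Polynomial ℂ) (h : ∀ z : ℂ, ‖z‖ = 1 → P.eval z = Q.eval z) :
    P = Q := by
  have : P - Q = 0 := by
    apply Polynomial.eq_zero_of_infinite_isRoot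
    apply circle_infinite.mono
    intro z hz
    simp only [Set.mem_setOf_eq, Polynomial.IsRoot, Polynomial.eval_sub]
    rw [h z hz]; ring
  exact sub_eq_zero.mp this

-- placeholders for already-proved lemmas
lemma Qpoly_recover (k : ℕ) (P : Polynomial ℂ) (hP : P.natDegree ≤ 2*k) :
    Qpoly k (fun n => if 0 ≤ n + k then P.coeff (n + k).toNat else 0) = P := by
  ext n
  rw [Qpoly_coeff]
  split_ifs with h h'
  · congr 1
    omega
  · omega
  · exact (Polynomial.coeff_eq_zero_of_natDegree_lt (lt_of_le_of_lt hP (by omega))).symm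

lemma sum_neg_Icc (k : ℕ) (f : ℤ → ℂ) :
    ∑ n ∈ Finset.Icc (-(k:ℤ)) (k:ℤ), f n = ∑ n ∈ Finset.Icc (-(k:ℤ)) (k:ℤ), f (-n) := by
  apply Finset.sum_equiv (Equiv.neg ℤ)
  · intro i; simp only [Finset.mem_Icc, Equiv.neg_apply]; omega
  · intro i _; simp

lemma coeff_symm (m : ℕ) (σ : ℤ → ℂ)
    (him : ∀ z : ℂ, ‖z‖ = 1 → (∑ n ∈ Finset.Icc (-(m:ℤ)) (m:ℤ), σ n * z ^ n).im = 0) :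
    ∀ j : ℤ, -(m:ℤ) ≤ j → j ≤ m → σ j = (starRingEnd ℂ) (σ (-j)) := by
  have hQ : Qpoly m σ = Qpoly m (fun n => (starRingEnd ℂ) (σ (-n))) := by
    apply poly_eq_of_circle
    intro z hz
    have hz0 : z ≠ 0 := by intro h; rw [h] at hz; simp at hz
    have habs : ‖z‖ = 1 := hz
    have hsum : ∑ n ∈ Finset.Icc (-(m:ℤ)) (m:ℤ), σ n * z ^ n
        = ∑ n ∈ Finset.Icc (-(m:ℤ)) (m:ℤ), (starRingEnd ℂ) (σ (-n)) * z ^ n := by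
      conv_lhs => rw [← Complex.conj_eq_iff_im.mpr (him z hz)]
      rw [_root_.map_sum, sum_neg_Icc]
      apply Finset.sum_congr rfl
      intro n _
      rw [_root_.map_mul, _root_.map_zpow₀, ← Complex.inv_eq_conj habs]
      rw [_root_.zpow_neg, _root_.inv_zpow, inv_inv]
    rw [trig_eval m σ z hz0, trig_eval m _ z hz0] at hsum
    exact mul_left_cancel₀ (zpow_ne_zero _ hz0) hsum
  intro j hj1 hj2
  have hn : ((j + m).toNat : ℤ) = j + m := by omega
  have h1 := Qpoly_coeff m σ (j + m).toNat
  have h2 := Qpoly_coeff m (fun n => (starRingEnd ℂ) (σ (-n))) (j + m).toNat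
  rw [hQ, h2] at h1
  have hle : (j + m).toNat ≤ 2*m := by omega
  rw [if_pos hle, if_pos hle] at h1
  have hjj : ((j + m).toNat : ℤ) - m = j := by omega
  rw [hjj] at h1
  simpa using h1.symm

lemma exp_ne_zero' (t : ℝ) : Complex.exp (t * Complex.I) ≠ 0 := Complex.exp_ne_zero _

lemma norm_exp_I (t : ℝ) : ‖Complex.exp ((t:ℂ) * Complex.I)‖ = 1 := by
  rw [Complex.norm_exp_ofReal_mul_I]

lemma hasDerivAt_expI (t0 : ℝ) :
    HasDerivAt (fun t : ℝ => Complex.exp ((t:ℂ) * Complex.I))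
      (Complex.exp ((t0:ℂ) * Complex.I) * Complex.I) t0 := by
  have h1 : HasDerivAt (fun z : ℂ => Complex.exp (z * Complex.I))
      (Complex.exp ((t0:ℂ) * Complex.I) * Complex.I) (t0 : ℂ) := by
    have := (Complex.hasDerivAt_exp ((t0:ℂ) * Complex.I)).comp (t0:ℂ)
      (hasDerivAt_mul_const Complex.I)
    exact this
  exact h1.comp_ofReal

lemma root_of_circle_root (k : ℕ) (τ : ℤ → ℂ)
    (hpos : ∀ z : ℂ, ‖z‖ = 1 →
      (∑ n ∈ Finset.Icc (-(k:ℤ)) (k:ℤ), τ n * z ^ n).im = 0 ∧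
      0 ≤ (∑ n ∈ Finset.Icc (-(k:ℤ)) (k:ℤ), τ n * z ^ n).re)
    (α : ℂ) (hα : ‖α‖ = 1) (R : Polynomial ℂ)
    (hQR : Qpoly k τ = (Polynomial.X - Polynomial.C α) * R) :
    R.IsRoot α := by
  have hα0 : α ≠ 0 := by intro h; rw [h] at hα; simp at hα
  set t0 := α.arg with ht0
  have hexp : Complex.exp ((t0:ℂ) * Complex.I) = α := by
    have := Complex.norm_mul_exp_arg_mul_I α
    rwa [show ‖α‖ = 1 from hα, Complex.ofReal_one, one_mul] at this
  set e : ℝ → ℂ := fun t => Complex.exp ((t:ℂ) * Complex.I) with he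
  have he0 : ∀ t, e t ≠ 0 := fun t => Complex.exp_ne_zero _
  have hnorm : ∀ t, ‖e t‖ = 1 := fun t => norm_exp_I t
  set F : ℝ → ℂ := fun t => ∑ n ∈ Finset.Icc (-(k:ℤ)) (k:ℤ), τ n * (e t) ^ n with hF
  have hFeval : ∀ t, F t = (e t - α) * ((e t) ^ (-(k:ℤ)) * R.eval (e t)) := by
    intro t
    rw [hF]
    simp only
    rw [trig_eval k τ (e t) (he0 t), hQR]
    simp [Polynomial.eval_mul]
    ring
  set u : ℝ → ℂ := fun t => (e t) ^ (-(k:ℤ)) * R.eval (e t) with hu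
  set L : ℂ := (α * Complex.I) * (α ^ (-(k:ℤ)) * R.eval α) with hL
  -- slope tendsto
  have hslope : Tendsto (slope e t0) (nhdsWithin t0 {t0}ᶜ) (nhds (α * Complex.I)) := by
    have := hasDerivAt_expI t0
    rw [hexp] at this
    exact hasDerivAt_iff_tendsto_slope.mp this
  have hucont : Tendsto u (nhdsWithin t0 {t0}ᶜ) (nhds (α ^ (-(k:ℤ)) * R.eval α)) := by
    have h1 : ContinuousAt (fun z : ℂ => z ^ (-(k:ℤ)) * R.eval z) α := by
      apply ContinuousAt.mul
      · exact continuousAt_zpow₀ α _ (Or.inl hα0)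
      · exact (Polynomial.continuous_aeval R).continuousAt.congr (by
          filter_upwards with z; simp [Polynomial.coe_aeval_eq_eval]
          )
    have h2 : ContinuousAt e t0 := (hasDerivAt_expI t0).continuousAt
    have he' : e t0 = α := hexp
    have h1' : ContinuousAt (fun z : ℂ => z ^ (-(k:ℤ)) * R.eval z) (e t0) := by rwa [he']
    have h3 : ContinuousAt u t0 := h1'.comp h2
    have h4 := h3.tendsto
    rw [show u t0 = α ^ (-(k:ℤ)) * R.eval α by rw [hu]; simp only; rw [he']] at h4
    exact h4.mono_left nhdsWithin_le_nhds
  -- the quotient function tends to L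
  have hG : Tendsto (fun t => slope e t0 t * u t) (nhdsWithin t0 {t0}ᶜ) (nhds L) := by
    rw [hL]
    exact hslope.mul hucont
  -- identify the quotient with (t - t0)⁻¹ • F t
  have hGF : ∀ t : ℝ, slope e t0 t * u t = (t - t0)⁻¹ • F t := by
    intro t
    rw [slope_def_module, smul_mul_assoc, hFeval t]
    congr 2
    rw [show e t0 = α from hexp]
  -- imaginary part of L is zero
  have himL : L.im = 0 := by
    have h5 : Tendsto (fun t => (slope e t0 t * u t).im) (nhdsWithin t0 {t0}ᶜ) (nhds L.im) :=
      (Complex.continuous_im.tendsto L).comp hG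
    have h6 : (fun t => (slope e t0 t * u t).im) = fun t => (0:ℝ) := by
      funext t
      rw [hGF t, Complex.smul_im, (hpos (e t) (hnorm t)).1]
      simp
    rw [h6] at h5
    exact (tendsto_nhds_unique h5 tendsto_const_nhds)
  -- real part of L is zero
  have hreL : L.re = 0 := by
    have h5 : Tendsto (fun t => (slope e t0 t * u t).re) (nhdsWithin t0 {t0}ᶜ) (nhds L.re) :=
      (Complex.continuous_re.tendsto L).comp hG
    have hge : 0 ≤ L.re := by
      have h7 : Tendsto (fun t => (slope e t0 t * u t).re) (nhdsWithin t0 (Set.Ioi t0)) (nhds L.re) :=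
        h5.mono_left (nhdsWithin_mono t0 (fun x hx => by simp only [Set.mem_compl_iff, Set.mem_singleton_iff]; exact ne_of_gt hx))
      apply ge_of_tendsto h7
      filter_upwards [self_mem_nhdsWithin] with t ht
      rw [hGF t, Complex.smul_re]
      have : (0:ℝ) < t - t0 := by simp only [Set.mem_Ioi] at ht; linarith
      exact mul_nonneg (by positivity) (hpos (e t) (hnorm t)).2
    have hle : L.re ≤ 0 := by
      have h7 : Tendsto (fun t => (slope e t0 t * u t).re) (nhdsWithin t0 (Set.Iio t0)) (nhds L.re) :=
        h5.mono_left (nhdsWithin_mono t0 (fun x hx => by simp only [Set.mem_compl_iff, Set.mem_singleton_iff]; exact ne_of_lt hx))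
      apply le_of_tendsto h7
      filter_upwards [self_mem_nhdsWithin] with t ht
      rw [hGF t, Complex.smul_re]
      have h8 : t - t0 < 0 := by simp only [Set.mem_Iio] at ht; linarith
      have h9 : (t - t0)⁻¹ ≤ 0 := le_of_lt (inv_neg''.mpr h8)
      exact mul_nonpos_of_nonpos_of_nonneg h9 (hpos (e t) (hnorm t)).2
    linarith
  have hL0 : L = 0 := Complex.ext hreL himL
  rw [hL] at hL0
  have hIa : α * Complex.I ≠ 0 := mul_ne_zero hα0 Complex.I_ne_zero
  have hzp : α ^ (-(k:ℤ)) ≠ 0 := zpow_ne_zero _ hα0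
  have := mul_eq_zero.mp hL0
  rcases this with h | h
  · exact absurd h hIa
  · rcases mul_eq_zero.mp h with h' | h'
    · exact absurd h' hzp
    · exact h'

lemma pos_extend (k : ℕ) (τ : ℤ → ℂ) (α : ℂ)
    (h : ∀ z : ℂ, ‖z‖ = 1 → z ≠ α →
      (∑ n ∈ Finset.Icc (-(k:ℤ)) (k:ℤ), τ n * z ^ n).im = 0 ∧
      0 ≤ (∑ n ∈ Finset.Icc (-(k:ℤ)) (k:ℤ), τ n * z ^ n).re) :
    ∀ z : ℂ, ‖z‖ = 1 →
      (∑ n ∈ Finset.Icc (-(k:ℤ)) (k:ℤ), τ n * z ^ n).im = 0 ∧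
      0 ≤ (∑ n ∈ Finset.Icc (-(k:ℤ)) (k:ℤ), τ n * z ^ n).re := by
  intro z hz
  by_cases hza : z ≠ α
  · exact h z hz hza
  push_neg at hza
  subst hza
  have hz0 : z ≠ 0 := by intro h0; rw [h0] at hz; simp at hz
  set F : ℝ → ℂ := fun t => ∑ n ∈ Finset.Icc (-(k:ℤ)) (k:ℤ), τ n * (z * Complex.exp ((t:ℂ) * Complex.I)) ^ n with hF
  have hcont : ContinuousAt F 0 := by
    have hterm : ∀ n : ℤ, ContinuousAt
        (fun t : ℝ => τ n * (z * Complex.exp ((t:ℂ) * Complex.I)) ^ n) 0 := by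
      intro n
      have h2 : ContinuousAt (fun t : ℝ => z * Complex.exp ((t:ℂ) * Complex.I)) 0 :=
        continuousAt_const.mul
          (Complex.continuous_exp.comp ((Complex.continuous_ofReal).mul continuous_const)).continuousAt
      have h1 : ContinuousAt (fun w : ℂ => w ^ n) (z * Complex.exp (((0:ℝ):ℂ) * Complex.I)) :=
        continuousAt_zpow₀ _ _ (Or.inl (mul_ne_zero hz0 (Complex.exp_ne_zero _)))
      have h3 : ContinuousAt
          (fun t : ℝ => (z * Complex.exp ((t:ℂ) * Complex.I)) ^ n) 0 := Filter.Tendsto.comp h1 h2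
      exact continuousAt_const.mul h3
    exact tendsto_finset_sum _ (fun n _ => hterm n)
  have hF0 : F 0 = ∑ n ∈ Finset.Icc (-(k:ℤ)) (k:ℤ), τ n * z ^ n := by
    rw [hF]; simp
  have htend : Tendsto F (nhdsWithin 0 {0}ᶜ) (nhds (F 0)) :=
    hcont.tendsto.mono_left nhdsWithin_le_nhds
  have hev : ∀ᶠ t in nhdsWithin (0:ℝ) {0}ᶜ, (F t).im = 0 ∧ 0 ≤ (F t).re := by
    have hmem : Set.Ioo (-1:ℝ) 1 ∈ nhdsWithin (0:ℝ) {0}ᶜ :=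
      nhdsWithin_le_nhds (Ioo_mem_nhds (by norm_num) (by norm_num))
    filter_upwards [hmem, self_mem_nhdsWithin] with t ht ht0
    have hne : z * Complex.exp ((t:ℂ) * Complex.I) ≠ z := by
      intro heq
      have : Complex.exp ((t:ℂ) * Complex.I) = 1 := by
        have := mul_left_cancel₀ hz0 (heq.trans (mul_one z).symm)
        exact this
      rw [Complex.exp_eq_one_iff] at this
      obtain ⟨n, hn⟩ := this
      have hI : ((t:ℂ)) = n * (2 * Real.pi) := by
        have hIne : (Complex.I : ℂ) ≠ 0 := Complex.I_ne_zero
        apply mul_right_cancel₀ hIne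
        rw [hn]; ring
      have ht' : t = n * (2 * Real.pi) := by exact_mod_cast hI
      simp only [Set.mem_Ioo] at ht
      simp only [Set.mem_compl_iff, Set.mem_singleton_iff] at ht0
      have hpi : (2:ℝ) < 2 * Real.pi := by nlinarith [Real.pi_gt_three]
      have : n = 0 := by
        by_contra hne'
        rcases lt_or_gt_of_ne hne' with hlt | hgt
        · have : (n:ℝ) ≤ -1 := by exact_mod_cast (by omega : n ≤ -1)
          nlinarith [ht.1, ht.2]
        · have : (1:ℝ) ≤ (n:ℝ) := by exact_mod_cast (by omega : 1 ≤ n)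
          nlinarith [ht.1, ht.2]
      rw [this] at ht'
      simp at ht'
      exact ht0 ht'
    have hnrm : ‖z * Complex.exp ((t:ℂ) * Complex.I)‖ = 1 := by
      rw [norm_mul, hz, Complex.norm_exp_ofReal_mul_I, one_mul]
    exact h _ hnrm hne
  constructor
  · rw [← hF0]
    have h5 : Tendsto (fun t => (F t).im) (nhdsWithin (0:ℝ) {0}ᶜ) (nhds (F 0).im) :=
      (Complex.continuous_im.tendsto _).comp htend
    refine tendsto_nhds_unique (h5.congr' ?_) tendsto_const_nhds
    filter_upwards [hev] with t ht using ht.1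
  · rw [← hF0]
    have h5 : Tendsto (fun t => (F t).re) (nhdsWithin (0:ℝ) {0}ᶜ) (nhds (F 0).re) :=
      (Complex.continuous_re.tendsto _).comp htend
    apply ge_of_tendsto h5
    filter_upwards [hev] with t ht using ht.2

lemma Qpoly_eval (k : ℕ) (τ : ℤ → ℂ) (z : ℂ) :
    (Qpoly k τ).eval z = ∑ n ∈ Finset.range (2*k+1), τ ((n:ℤ) - k) * z ^ n := by
  unfold Qpoly
  rw [Polynomial.eval_finset_sum]
  simp [Polynomial.eval_monomial]

lemma circle_factor (α z : ℂ) (hα : α ≠ 0) (hz : ‖z‖ = 1) :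
    (z - α) * (z - ((starRingEnd ℂ) α)⁻¹)
      = -((starRingEnd ℂ) α)⁻¹ * z * ((‖z - α‖ ^ 2 : ℝ) : ℂ) := by
  have hzz : z * (starRingEnd ℂ) z = 1 := by
    rw [Complex.mul_conj]
    norm_cast
    rw [← Complex.sq_norm, hz]; norm_num
  have hc : ((starRingEnd ℂ) α)⁻¹ * (starRingEnd ℂ) α = 1 :=
    inv_mul_cancel₀ (by simpa using hα)
  have key : (((‖z - α‖ ^ 2 : ℝ)) : ℂ) = (z - α) * ((starRingEnd ℂ) z - (starRingEnd ℂ) α) := by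
    rw [← _root_.map_sub, Complex.mul_conj]
    norm_cast
    rw [← Complex.sq_norm]
  rw [key]
  linear_combination ((z - α) * ((starRingEnd ℂ) α)⁻¹) * hzz - ((z - α) * z) * hc

lemma conj_inv_root (k : ℕ) (τ : ℤ → ℂ)
    (hsym : ∀ j : ℤ, -(k:ℤ) ≤ j → j ≤ k → τ j = (starRingEnd ℂ) (τ (-j)))
    (α : ℂ) (hα0 : α ≠ 0) (hroot : (Qpoly k τ).eval α = 0) :
    (Qpoly k τ).eval (((starRingEnd ℂ) α)⁻¹) = 0 := by
  set c := (starRingEnd ℂ) α with hcdef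
  have hc0 : c ≠ 0 := by simpa [hcdef] using hα0
  have hmul : c ^ (2*k) * (Qpoly k τ).eval c⁻¹ = 0 := by
    rw [Qpoly_eval, Finset.mul_sum]
    have : ∀ n ∈ Finset.range (2*k+1),
        c ^ (2*k) * (τ ((n:ℤ) - k) * (c⁻¹) ^ n) = τ ((n:ℤ) - k) * c ^ (2*k - n) := by
      intro n hn
      rw [Finset.mem_range] at hn
      rw [_root_.inv_pow, pow_sub₀ c hc0 (by omega : n ≤ 2*k)]
      field_simp
    rw [Finset.sum_congr rfl this]
    rw [← Finset.sum_range_reflect (fun n => τ ((n:ℤ) - k) * c ^ (2*k - n)) (2*k+1)]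
    have h2 : ∀ n ∈ Finset.range (2*k+1),
        τ (((2*k + 1 - 1 - n : ℕ):ℤ) - k) * c ^ (2*k - (2*k+1-1-n)) =
        (starRingEnd ℂ) (τ ((n:ℤ) - k) * α ^ n) := by
      intro n hn
      rw [Finset.mem_range] at hn
      have e1 : ((2*k + 1 - 1 - n : ℕ):ℤ) - k = -(((n:ℤ) - k)) := by omega
      have e2 : 2*k - (2*k+1-1-n) = n := by omega
      rw [e1, e2, _root_.map_mul, _root_.map_pow]
      have h3 := hsym (-((n:ℤ) - k)) (by omega) (by omega)
      rw [neg_neg] at h3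
      rw [h3, ← hcdef]
    rw [Finset.sum_congr rfl h2, ← _root_.map_sum]
    rw [show ∑ n ∈ Finset.range (2*k+1), τ ((n:ℤ) - k) * α ^ n = (Qpoly k τ).eval α from (Qpoly_eval k τ α).symm]
    rw [hroot, _root_.map_zero]
  have := mul_eq_zero.mp hmul
  rcases this with h | h
  · exact absurd h (pow_ne_zero _ hc0)
  · exact h

end FejerRieszAux

/-- Scalar Fejér–Riesz lemma. -/
theorem fejer_riesz_scalar (m : ℕ) (σ : ℤ → ℂ)
    (hpos : ∀ z : ℂ, ‖z‖ = 1 →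
      (∑ n ∈ Finset.Icc (-(m:ℤ)) (m:ℤ), σ n * z ^ n).im = 0 ∧
      0 ≤ (∑ n ∈ Finset.Icc (-(m:ℤ)) (m:ℤ), σ n * z ^ n).re) :
    ∃ ρ : ℕ → ℂ, ∀ z : ℂ, ‖z‖ = 1 →
      ∑ n ∈ Finset.Icc (-(m:ℤ)) (m:ℤ), σ n * z ^ n =
        ((‖∑ n ∈ Finset.range (m+1), ρ n * z ^ n‖ ^ 2 : ℝ) : ℂ) := by
  induction m generalizing σ with
  | zero =>
    refine ⟨fun _ => (Real.sqrt (σ 0).re : ℂ), ?_⟩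
    intro z hz
    have h0 := hpos 1 (by norm_num)
    have hIcc : Finset.Icc (-((0:ℕ):ℤ)) ((0:ℕ):ℤ) = {0} := by decide
    rw [hIcc] at h0 ⊢
    simp only [Finset.sum_singleton, zpow_zero, mul_one, _root_.one_zpow] at h0 ⊢
    rw [Finset.sum_range_one, pow_zero, mul_one]
    rw [Complex.norm_real, Real.norm_eq_abs]
    rw [_root_.abs_of_nonneg (Real.sqrt_nonneg _), Real.sq_sqrt h0.2]
    exact (Complex.ext (by simp) (by simpa using h0.1.symm)).symm
  | succ M ih =>
    have him : ∀ z : ℂ, ‖z‖ = 1 →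
        (∑ n ∈ Finset.Icc (-((M+1:ℕ):ℤ)) ((M+1:ℕ):ℤ), σ n * z ^ n).im = 0 :=
      fun z hz => (hpos z hz).1
    have hsym := coeff_symm (M+1) σ him
    by_cases hm : σ ((M+1:ℕ):ℤ) = 0
    · -- degree reduction
      have hm' : σ (-((M+1:ℕ):ℤ)) = 0 := by
        have := hsym ((M+1:ℕ):ℤ) (by push_cast; omega) le_rfl
        rw [hm] at this
        have h2 : (starRingEnd ℂ) (σ (-((M+1:ℕ):ℤ))) = 0 := this.symm
        simpa using congrArg (starRingEnd ℂ) h2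
      have hshrink : ∀ z : ℂ,
          ∑ n ∈ Finset.Icc (-(M:ℤ)) (M:ℤ), σ n * z ^ n
            = ∑ n ∈ Finset.Icc (-((M+1:ℕ):ℤ)) ((M+1:ℕ):ℤ), σ n * z ^ n := by
        intro z
        apply Finset.sum_subset
        · intro x hx
          simp only [Finset.mem_Icc] at hx ⊢
          push_cast
          omega
        · intro x hx hnx
          simp only [Finset.mem_Icc] at hx hnx
          push_cast at hx hnx
          have : x = ((M+1:ℕ):ℤ) ∨ x = -((M+1:ℕ):ℤ) := by push_cast; omega
          rcases this with h | h <;> subst h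
          · rw [hm, zero_mul]
          · rw [hm', zero_mul]
      obtain ⟨ρ, hρ⟩ := ih σ (by
        intro z hz
        rw [hshrink z]
        exact hpos z hz)
      refine ⟨fun n => if n ≤ M then ρ n else 0, ?_⟩
      intro z hz
      rw [← hshrink z, hρ z hz]
      have hsums : ∑ n ∈ Finset.range (M+1+1), (if n ≤ M then ρ n else 0) * z ^ n
          = ∑ n ∈ Finset.range (M+1), ρ n * z ^ n := by
        rw [Finset.sum_range_succ, if_neg (by omega : ¬ M+1 ≤ M), zero_mul, add_zero]
        exact Finset.sum_congr rfl (fun n hn => by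
          rw [if_pos (by rw [Finset.mem_range] at hn; omega : n ≤ M)])
      rw [hsums]
    · -- main case
      have hσneg : σ (-((M+1:ℕ):ℤ)) ≠ 0 := by
        intro h
        have h1 := hsym ((M+1:ℕ):ℤ) (by push_cast; omega) le_rfl
        rw [h] at h1
        simp at h1
        exact hm h1
      set Q := Qpoly (M+1) σ with hQdef
      have hQtop : Q.coeff (2*(M+1)) = σ ((M+1:ℕ):ℤ) := by
        rw [hQdef, Qpoly_coeff, if_pos le_rfl]
        congr 1
        try omega
      have hQ0 : Q.coeff 0 = σ (-((M+1:ℕ):ℤ)) := by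
        rw [hQdef, Qpoly_coeff, if_pos (by omega)]
        congr 1
        try omega
      have hQne : Q ≠ 0 := by
        intro h
        rw [h, Polynomial.coeff_zero] at hQtop
        exact hm hQtop.symm
      have hdeg : Q.natDegree = 2*(M+1) :=
        le_antisymm (Qpoly_natDegree_le _ _)
          (Polynomial.le_natDegree_of_ne_zero (by rw [hQtop]; exact hm))
      have hdegpos : 0 < Q.degree := by
        rw [Polynomial.degree_eq_natDegree hQne, hdeg]
        exact_mod_cast (by omega : 0 < 2*(M+1))
      obtain ⟨α, hαroot⟩ := Complex.exists_root hdegpos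
      have hα0 : α ≠ 0 := by
        intro h
        subst h
        rw [Polynomial.IsRoot, ← Polynomial.coeff_zero_eq_eval_zero, hQ0] at hαroot
        exact hσneg hαroot
      set γ := ((starRingEnd ℂ) α)⁻¹ with hγ
      have hfac : ∃ R2 : Polynomial ℂ,
          Q = (Polynomial.X - Polynomial.C α) * ((Polynomial.X - Polynomial.C γ) * R2) := by
        by_cases hcirc : ‖α‖ = 1
        · have hγα : γ = α := by
            have habs : ‖α‖ = 1 := hcirc
            rw [hγ, ← Complex.inv_eq_conj habs, inv_inv]
          obtain ⟨R, hR⟩ := Polynomial.dvd_iff_isRoot.mpr hαroot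
          have hRroot := root_of_circle_root (M+1) σ hpos α hcirc R hR
          obtain ⟨R2, hR2⟩ := Polynomial.dvd_iff_isRoot.mpr hRroot
          exact ⟨R2, by rw [hR, hR2, hγα]⟩
        · have hγroot : Q.eval γ = 0 := conj_inv_root (M+1) σ hsym α hα0 hαroot
          have hγα : γ ≠ α := by
            intro h
            apply hcirc
            have hc0 : (starRingEnd ℂ) α ≠ 0 := by simpa using hα0
            have h1 : α * (starRingEnd ℂ) α = 1 := by
              have := congrArg (· * (starRingEnd ℂ) α) h
              simpa [hγ, inv_mul_cancel₀ hc0] using this.symm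
            have h2 : Complex.normSq α = 1 := by
              have := (Complex.mul_conj α).symm.trans h1
              exact_mod_cast this
            have h3 : ‖α‖ = 1 := by
              have h4 := Complex.normSq_eq_norm_sq α
              nlinarith [norm_nonneg α]
            exact h3
          obtain ⟨R, hR⟩ := Polynomial.dvd_iff_isRoot.mpr hαroot
          have hRγ : R.eval γ = 0 := by
            have h5 := hγroot
            rw [hR, Polynomial.eval_mul] at h5
            rcases mul_eq_zero.mp h5 with h6 | h6
            · exfalso
              rw [Polynomial.eval_sub, Polynomial.eval_X, Polynomial.eval_C] at h6
              exact hγα (by linear_combination h6)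
            · exact h6
          obtain ⟨R2, hR2⟩ := Polynomial.dvd_iff_isRoot.mpr hRγ
          exact ⟨R2, by rw [hR, hR2]⟩
      obtain ⟨R2, hQfac⟩ := hfac
      have hR2ne : R2 ≠ 0 := by
        intro h
        rw [h, mul_zero, mul_zero] at hQfac
        exact hQne hQfac
      have hR2deg : R2.natDegree = 2*M := by
        have h7 := hdeg
        rw [hQfac, Polynomial.natDegree_mul (Polynomial.X_sub_C_ne_zero α)
              (mul_ne_zero (Polynomial.X_sub_C_ne_zero γ) hR2ne),
            Polynomial.natDegree_mul (Polynomial.X_sub_C_ne_zero γ) hR2ne,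
            Polynomial.natDegree_X_sub_C, Polynomial.natDegree_X_sub_C] at h7
        omega
      set P := Polynomial.C (-γ) * R2 with hPdef
      have hPdeg : P.natDegree ≤ 2*M :=
        le_trans (Polynomial.natDegree_C_mul_le _ _) (le_of_eq hR2deg)
      set σ' : ℤ → ℂ := fun n => if 0 ≤ n + M then P.coeff (n + M).toNat else 0 with hσ'
      have hQP : Qpoly M σ' = P := Qpoly_recover M P hPdeg
      have hkey : ∀ z : ℂ, ‖z‖ = 1 →
          ∑ n ∈ Finset.Icc (-((M+1:ℕ):ℤ)) ((M+1:ℕ):ℤ), σ n * z ^ n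
            = ((‖z - α‖ ^ 2 : ℝ) : ℂ) * ∑ n ∈ Finset.Icc (-(M:ℤ)) (M:ℤ), σ' n * z ^ n := by
        intro z hz
        have hz0 : z ≠ 0 := by intro h; rw [h] at hz; simp at hz
        rw [trig_eval _ σ z hz0, trig_eval _ σ' z hz0, hQP, ← hQdef, hQfac, hPdef]
        simp only [Polynomial.eval_mul, Polynomial.eval_sub, Polynomial.eval_X,
          Polynomial.eval_C]
        have hfac2 := circle_factor α z hα0 hz
        rw [← hγ] at hfac2
        have hzp : z ^ (-((M+1:ℕ):ℤ)) * z = z ^ (-(M:ℤ)) := by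
          have h8 : (-((M+1:ℕ):ℤ)) + 1 = -(M:ℤ) := by push_cast; ring
          calc z ^ (-((M+1:ℕ):ℤ)) * z = z ^ (-((M+1:ℕ):ℤ)) * z ^ (1:ℤ) := by rw [_root_.zpow_one]
            _ = z ^ ((-((M+1:ℕ):ℤ)) + 1) := (zpow_add₀ hz0 _ _).symm
            _ = z ^ (-(M:ℤ)) := by rw [h8]
        calc z ^ (-((M+1:ℕ):ℤ)) * ((z - α) * ((z - γ) * R2.eval z))
            = (z ^ (-((M+1:ℕ):ℤ)) * z) * (-γ * ((‖z - α‖ ^ 2 : ℝ) : ℂ) * R2.eval z) := by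
              rw [show (z - α) * ((z - γ) * R2.eval z) = ((z - α) * (z - γ)) * R2.eval z by ring,
                hfac2]
              ring
          _ = ((‖z - α‖ ^ 2 : ℝ) : ℂ) * (z ^ (-(M:ℤ)) * (-γ * R2.eval z)) := by
              rw [hzp]; ring
      have hpos' : ∀ z : ℂ, ‖z‖ = 1 →
          (∑ n ∈ Finset.Icc (-(M:ℤ)) (M:ℤ), σ' n * z ^ n).im = 0 ∧
          0 ≤ (∑ n ∈ Finset.Icc (-(M:ℤ)) (M:ℤ), σ' n * z ^ n).re := by
        apply pos_extend M σ' α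
        intro z hz hzα
        have hk := hkey z hz
        have hS := hpos z hz
        rw [hk] at hS
        have hr : (0:ℝ) < ‖z - α‖ ^ 2 :=
          pow_pos (norm_pos_iff.mpr (sub_ne_zero.mpr hzα)) 2
        obtain ⟨h1, h2⟩ := hS
        simp only [Complex.mul_im, Complex.mul_re, Complex.ofReal_re, Complex.ofReal_im,
          zero_mul, mul_zero, add_zero, sub_zero, zero_add] at h1 h2
        constructor
        · rcases mul_eq_zero.mp h1 with h | h
          · exact absurd h (ne_of_gt hr)
          · exact h
        · by_contra hcon
          push_neg at hcon
          nlinarith [h2, hr, hcon]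
      obtain ⟨ρ', hρ'⟩ := ih σ' hpos'
      refine ⟨fun n => (if 1 ≤ n then ρ' (n-1) else 0) - α * (if n ≤ M then ρ' n else 0), ?_⟩
      intro z hz
      have hps : ∑ n ∈ Finset.range (M+1+1),
          ((if 1 ≤ n then ρ' (n-1) else 0) - α * (if n ≤ M then ρ' n else 0)) * z ^ n
          = (z - α) * ∑ n ∈ Finset.range (M+1), ρ' n * z ^ n := by
        have hsplit : ∀ n : ℕ, ((if 1 ≤ n then ρ' (n-1) else 0) - α * (if n ≤ M then ρ' n else 0)) * z ^ n
            = (if 1 ≤ n then ρ' (n-1) else 0) * z ^ n - α * ((if n ≤ M then ρ' n else 0) * z ^ n) := by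
          intro n; ring
        rw [Finset.sum_congr rfl (fun n _ => hsplit n), Finset.sum_sub_distrib, ← Finset.mul_sum]
        have hA : ∑ n ∈ Finset.range (M+1+1), (if 1 ≤ n then ρ' (n-1) else 0) * z ^ n
            = z * ∑ n ∈ Finset.range (M+1), ρ' n * z ^ n := by
          rw [Finset.sum_range_succ' (fun n => (if 1 ≤ n then ρ' (n-1) else 0) * z ^ n) (M+1)]
          simp only [Nat.le_add_left, if_pos, Nat.add_sub_cancel, if_neg (by omega : ¬ (1:ℕ) ≤ 0),
            zero_mul, add_zero]
          rw [Finset.mul_sum]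
          apply Finset.sum_congr rfl
          intro n _
          rw [_root_.pow_succ]
          ring
        have hB : ∑ n ∈ Finset.range (M+1+1), (if n ≤ M then ρ' n else 0) * z ^ n
            = ∑ n ∈ Finset.range (M+1), ρ' n * z ^ n := by
          rw [Finset.sum_range_succ, if_neg (by omega : ¬ M+1 ≤ M), zero_mul, add_zero]
          exact Finset.sum_congr rfl (fun n hn => by
            rw [if_pos (by rw [Finset.mem_range] at hn; omega : n ≤ M)])
        rw [hA, hB]
        ring
      rw [hkey z hz, hρ' z hz, hps, norm_mul, mul_pow, Complex.ofReal_mul]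
end

section
/- If \chi^+ is an r×r matrix function with entries in H_2 of the unit disk such that S(z) = \chi^+(z)(\chi^+(z))^* a.e. on the unit circle for some matrix function S that is positive definite a.e. and has \log\det S \in L_1, then \det\chi^+ is not identically zero, and |\det\chi^+(z)|^2 = \det S(z) a.e. on the unit circle. -/
open MeasureTheory Complex Metric Set Matrix
open scoped ComplexOrder

/-- For a spectral factor of a positive definite `S` with integrable `log det S`,
the determinant is not identically zero and `|det χ⁺|² = det S` a.e. -/
theorem det_spectral_factor (r : ℕ) (χ : ℂ → (Matrix (Fin r) (Fin r) ℂ))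
    (hH2 : ∀ i j, HardyMem 2 (fun z => χ z i j))
    (B : ℝ → (Matrix (Fin r) (Fin r) ℂ))
    (hB : ∀ i j, IsBoundaryValue (fun z => χ z i j) (fun t => B t i j))
    (S : ℝ → (Matrix (Fin r) (Fin r) ℂ))
    (hpos : ∀ᵐ (t : ℝ) ∂(MeasureTheory.volume.restrict (Set.Ioc (0:ℝ) (2*Real.pi))), (S t).PosDef)
    (hlog : IntervalIntegrable (fun t => Real.log ‖(S t).det‖)
      MeasureTheory.volume 0 (2*Real.pi))
    (hfact : ∀ᵐ (t : ℝ) ∂(MeasureTheory.volume.restrict (Set.Ioc (0:ℝ) (2*Real.pi))), S t = B t * (B t)ᴴ) :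
    (¬ ∀ z ∈ Metric.ball (0:ℂ) 1, (χ z).det = 0) ∧
    (∀ᵐ (t : ℝ) ∂(MeasureTheory.volume.restrict (Set.Ioc (0:ℝ) (2*Real.pi))), ((‖(B t).det‖ ^ 2 : ℝ) : ℂ) = (S t).det) := by
  have μneBot : (MeasureTheory.ae
      (MeasureTheory.volume.restrict (Set.Ioc (0:ℝ) (2*Real.pi)))).NeBot := by
    refine MeasureTheory.ae_neBot.2 ?_
    rw [Ne, MeasureTheory.Measure.restrict_eq_zero, Real.volume_Ioc]
    simp [Real.pi_pos, Real.pi_pos.le, ne_of_gt, ENNReal.ofReal_eq_zero, not_le,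
      mul_pos, Real.pi_pos]
  -- a.e. the det of B is nonzero
  have hdetB : ∀ᵐ (t : ℝ) ∂(MeasureTheory.volume.restrict (Set.Ioc (0:ℝ) (2*Real.pi))),
      (B t).det ≠ 0 ∧ ((‖(B t).det‖ ^ 2 : ℝ) : ℂ) = (S t).det := by
    filter_upwards [hpos, hfact] with t hp hf
    have hdet : (S t).det = (B t).det * star (B t).det := by
      rw [hf, Matrix.det_mul, Matrix.det_conjTranspose]
    have hS0 : (S t).det ≠ 0 := hp.det_pos.ne'
    constructor
    · intro h0
      exact hS0 (by rw [hdet, h0, zero_mul])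
    · rw [hdet]
      push_cast [Complex.sq_norm]
      rw [Complex.normSq_eq_conj_mul_self]
      rw [Complex.star_def]
      ring
  refine ⟨?_, hdetB.mono fun t ht => ht.2⟩
  -- part 1: det χ not identically zero
  intro hzero
  -- a.e. entrywise boundary limits
  have hBall : ∀ᵐ (t : ℝ) ∂(MeasureTheory.volume.restrict (Set.Ioc (0:ℝ) (2*Real.pi))),
      ∀ i j, Filter.Tendsto (fun r : ℝ => χ ((r:ℂ) * Complex.exp (t * Complex.I)) i j)
        (nhdsWithin 1 (Set.Iio 1)) (nhds (B t i j)) :=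
    MeasureTheory.ae_all_iff.2 fun i => MeasureTheory.ae_all_iff.2 fun j => hB i j
  have hcontr : ∀ᵐ (t : ℝ) ∂(MeasureTheory.volume.restrict (Set.Ioc (0:ℝ) (2*Real.pi))),
      False := by
    filter_upwards [hBall, hdetB] with t ht hd
    -- matrix-valued convergence
    have hM : Filter.Tendsto (fun r : ℝ => χ ((r:ℂ) * Complex.exp (t * Complex.I)))
        (nhdsWithin 1 (Set.Iio 1)) (nhds (B t)) := by
      refine tendsto_pi_nhds.2 ?_
      intro i
      rw [tendsto_pi_nhds]
      intro j
      exact ht i j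
    have hdetTendsto : Filter.Tendsto
        (fun r : ℝ => (χ ((r:ℂ) * Complex.exp (t * Complex.I))).det)
        (nhdsWithin 1 (Set.Iio 1)) (nhds (B t).det) :=
      ((continuous_id.matrix_det (R := ℂ) (n := Fin r)).tendsto (B t)).comp hM
    -- but eventually the det is 0
    have hev : ∀ᶠ (ρ : ℝ) in nhdsWithin 1 (Set.Iio 1),
        (χ ((ρ:ℂ) * Complex.exp (t * Complex.I))).det = 0 := by
      have h1 : ∀ᶠ (ρ : ℝ) in nhdsWithin 1 (Set.Iio 1), (0:ℝ) < ρ :=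
        eventually_nhdsWithin_of_eventually_nhds (eventually_gt_nhds one_pos)
      have h2 : ∀ᶠ (ρ : ℝ) in nhdsWithin 1 (Set.Iio 1), ρ < 1 :=
        eventually_mem_nhdsWithin
      filter_upwards [h1, h2] with ρ hρ0 hρ1
      apply hzero
      rw [Metric.mem_ball, dist_zero_right, norm_mul]
      have : ‖Complex.exp ((t:ℂ) * Complex.I)‖ = 1 := by
        rw [Complex.norm_exp]
        simp
      rw [this, mul_one, Complex.norm_real, Real.norm_eq_abs, abs_of_pos hρ0]
      exact hρ1
    have : (B t).det = 0 :=
      tendsto_nhds_unique hdetTendsto (Filter.Tendsto.congr'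
        (hev.mono fun ρ hρ => hρ.symm) tendsto_const_nhds)
    exact hd.1 this
  exact μneBot.ne (Filter.eventually_false_iff_eq_bot.1 hcontr)
end
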